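/- (Refined right-tail sub-Gaussianity of Bernoulli random variables.) For every μ ∈ [1/2, 1] and every λ ≥ 0, μ·exp(λ·(1−μ)) + (1−μ)·exp(−λ·μ) ≤ exp((λ²/2)·μ·(1−μ)). Equivalently, if X is a Bernoulli random variable with mean μ ∈ [1/2,1], then log E[exp(λ·(X − μ))] ≤ (λ²/2)·μ·(1−μ) for all λ ≥ 0. -/

import Mathlib

open Real

lemma tanh_aux : ∀ x ∈ Set.Ici (0:ℝ), 2 * Real.exp x - 2 ≤ x * (Real.exp x + 1) := by
  have hmono : MonotoneOn (fun t : ℝ => t * (Real.exp t + 1) - (2 * Real.exp t - 2)) (Set.Ici 0) := by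
    have hd : ∀ t : ℝ, HasDerivAt (fun t : ℝ => t * (Real.exp t + 1) - (2 * Real.exp t - 2))
        ((Real.exp t + 1) + t * Real.exp t - 2 * Real.exp t) t := by
      intro t
      have h1 : HasDerivAt (fun t : ℝ => t * (Real.exp t + 1))
          (1 * (Real.exp t + 1) + t * Real.exp t) t := by
        simpa using (hasDerivAt_id t).fun_mul ((Real.hasDerivAt_exp t).add_const 1)
      have h2 : HasDerivAt (fun t : ℝ => 2 * Real.exp t - 2) (2 * Real.exp t) t := by
        simpa using ((Real.hasDerivAt_exp t).const_mul 2).sub_const 2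
      simpa [mul_comm] using h1.fun_sub h2
    apply monotoneOn_of_deriv_nonneg (convex_Ici 0)
    · exact (Continuous.continuousOn (by continuity))
    · exact fun t ht => (hd t).differentiableAt.differentiableWithinAt
    · intro t ht
      rw [(hd t).deriv]
      have ht0 : 0 ≤ t := le_of_lt (by simpa using ht)
      -- (exp t + 1) + t exp t - 2 exp t ≥ 0 ⇔ 1 + t exp t ≥ exp t ... need exp t (1 - t) ≤ 1
      have h3 : (1 - t) * Real.exp t ≤ 1 := by
        have h := Real.add_one_le_exp (-t)
        have h2 := mul_le_mul_of_nonneg_right h (Real.exp_pos t).le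
        rw [← Real.exp_add, neg_add_cancel, Real.exp_zero] at h2
        nlinarith [h2]
      nlinarith
  intro x hx
  have := hmono (Set.self_mem_Ici) hx (by simpa using hx)
  simp only [Real.exp_zero] at this
  nlinarith [this]

theorem bernoulli_right_tail_subgaussian (μ : ℝ) (hμ : μ ∈ Set.Icc (1/2 : ℝ) 1)
    (lam : ℝ) (hlam : 0 ≤ lam) :
    μ * Real.exp (lam * (1 - μ)) + (1 - μ) * Real.exp (-lam * μ)
      ≤ Real.exp (lam ^ 2 / 2 * (μ * (1 - μ))) := by
  obtain ⟨hμ1, hμ2⟩ := hμ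
  have hμpos : 0 < μ := by linarith
  have hDpos : ∀ t : ℝ, 0 < μ * Real.exp t + (1 - μ) := by
    intro t
    have := Real.exp_pos t
    nlinarith
  -- g t = t μ + t²/2 μ(1-μ) - log(μ e^t + 1-μ) is monotone on Ici 0
  set g : ℝ → ℝ := fun t => t * μ + t ^ 2 / 2 * (μ * (1 - μ)) - Real.log (μ * Real.exp t + (1 - μ)) with hg
  have hd : ∀ t : ℝ, HasDerivAt g
      (μ + t * (μ * (1 - μ)) - μ * Real.exp t / (μ * Real.exp t + (1 - μ))) t := by
    intro t
    have h1 : HasDerivAt (fun t : ℝ => t * μ) μ t := by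
      simpa using (hasDerivAt_id t).mul_const μ
    have h2 : HasDerivAt (fun t : ℝ => t ^ 2 / 2 * (μ * (1 - μ))) (t * (μ * (1 - μ))) t := by
      have : HasDerivAt (fun t : ℝ => t ^ 2) (2 * t) t := by
        simpa using hasDerivAt_pow 2 t
      simpa [mul_comm, mul_assoc, mul_div_assoc] using (this.div_const 2).mul_const (μ * (1 - μ))
    have h3 : HasDerivAt (fun t : ℝ => μ * Real.exp t + (1 - μ)) (μ * Real.exp t) t :=
      ((Real.hasDerivAt_exp t).const_mul μ).add_const (1 - μ)
    have h4 : HasDerivAt (fun t : ℝ => Real.log (μ * Real.exp t + (1 - μ)))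
        (μ * Real.exp t / (μ * Real.exp t + (1 - μ))) t :=
      h3.log (ne_of_gt (hDpos t))
    exact (h1.add h2).sub h4
  have hmono : MonotoneOn g (Set.Ici 0) := by
    apply monotoneOn_of_deriv_nonneg (convex_Ici 0)
    · apply Continuous.continuousOn
      apply Continuous.sub (by continuity)
      exact ((continuous_const.mul Real.continuous_exp).add continuous_const).log
        (fun x => ne_of_gt (hDpos x))
    · exact fun t ht => (hd t).differentiableAt.differentiableWithinAt
    · intro t ht
      rw [(hd t).deriv]
      have ht0 : 0 ≤ t := le_of_lt (by simpa using ht)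
      have hD := hDpos t
      rw [sub_nonneg, div_le_iff₀ hD]
      have hexp := Real.exp_pos t
      have htanh := tanh_aux t ht0
      have e2 : 0 ≤ t * (μ - 1/2) * (Real.exp t - 1) :=
        mul_nonneg (mul_nonneg ht0 (by linarith)) (sub_nonneg.mpr (Real.one_le_exp ht0))
      have e3 : Real.exp t - 1 ≤ t * (μ * Real.exp t + (1 - μ)) := by nlinarith
      have e4 := mul_le_mul_of_nonneg_left e3 (mul_nonneg hμpos.le (sub_nonneg.mpr hμ2))
      nlinarith [e4]
  have hg0 : g 0 = 0 := by simp [hg]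
  have hkey : Real.log (μ * Real.exp lam + (1 - μ)) ≤ lam * μ + lam ^ 2 / 2 * (μ * (1 - μ)) := by
    have := hmono Set.self_mem_Ici (Set.mem_Ici.mpr hlam) hlam
    rw [hg0] at this
    simp only [hg] at this
    linarith
  have hexp : μ * Real.exp lam + (1 - μ) ≤ Real.exp (lam * μ + lam ^ 2 / 2 * (μ * (1 - μ))) := by
    calc μ * Real.exp lam + (1 - μ) = Real.exp (Real.log (μ * Real.exp lam + (1 - μ))) :=
          (Real.exp_log (hDpos lam)).symm
      _ ≤ _ := Real.exp_le_exp.mpr hkey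
  have hmul := mul_le_mul_of_nonneg_left hexp (Real.exp_pos (-lam * μ)).le
  calc μ * Real.exp (lam * (1 - μ)) + (1 - μ) * Real.exp (-lam * μ)
      = Real.exp (-lam * μ) * (μ * Real.exp lam + (1 - μ)) := by
        rw [show lam * (1 - μ) = -lam * μ + lam by ring, Real.exp_add]
        ring
    _ ≤ Real.exp (-lam * μ) * Real.exp (lam * μ + lam ^ 2 / 2 * (μ * (1 - μ))) := hmul
    _ = Real.exp (lam ^ 2 / 2 * (μ * (1 - μ))) := by
        rw [← Real.exp_add]; ring_nf
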